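/- A chain map f: X → Y between chain complexes over a field k which has the left lifting property with respect to all maps D^n → S^n (n ∈ ℤ) is both a monomorphism and a quasi-isomorphism. -/

import Mathlib

open CategoryTheory CategoryTheory.Limits

/-- The sphere chain complex `S^n(V)`: `V` concentrated in degree `n`. -/
noncomputable def sphere {k : Type} [CommRing k] (V : ModuleCat k) (n : ℤ) :
    ChainComplex (ModuleCat k) ℤ :=
  (HomologicalComplex.single (ModuleCat k) (ComplexShape.down ℤ) n).obj V

/-- Degree-`i` component of the disk complex `D^n(V)`. -/
noncomputable def diskX {k : Type} [CommRing k] (V : ModuleCat k) (n i : ℤ) : ModuleCat k :=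
  if i = n ∨ i = n - 1 then V else ModuleCat.of k PUnit

/-- The disk chain complex `D^n(V)`: `V` in degrees `n` and `n-1`, with identity
differential. -/
noncomputable def disk {k : Type} [CommRing k] (V : ModuleCat k) (n : ℤ) :
    ChainComplex (ModuleCat k) ℤ where
  X i := diskX V n i
  d i j :=
    if h : i = n ∧ j = n - 1 then
      eqToHom (show diskX V n i = diskX V n j by
        rw [diskX, diskX, if_pos (Or.inl h.1), if_pos (Or.inr h.2)])
    else 0
  shape i j hij := by
    rw [dif_neg]
    rintro ⟨h1, h2⟩
    exact hij (by simp only [ComplexShape.down_Rel]; omega)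
  d_comp_d' i j l _ _ := by
    by_cases h : i = n ∧ j = n - 1
    · rw [dif_neg (by omega : ¬ (j = n ∧ l = n - 1))]
      simp
    · rw [dif_neg h]
      simp

/-- The canonical projection `D^n(V) ⟶ S^n(V)`, the identity in degree `n`. -/
noncomputable def diskToSphere {k : Type} [CommRing k] (V : ModuleCat k) (n : ℤ) :
    disk V n ⟶ sphere V n :=
  HomologicalComplex.mkHomToSingle
    (eqToHom (show (disk V n).X n = V by
      simp [disk, diskX]))
    (fun i hi => by
      have : ¬ (i = n ∧ n = n - 1) := by omega
      simp only [disk, dif_neg this, zero_comp]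
      rfl)

/-- The canonical inclusion `S^n(V) ⟶ D^{n+1}(V)`, the identity in degree `n`. -/
noncomputable def sphereToDisk {k : Type} [CommRing k] (V : ModuleCat k) (n : ℤ) :
    sphere V n ⟶ disk V (n + 1) :=
  HomologicalComplex.mkHomFromSingle
    (eqToHom (show V = (disk V (n+1)).X n by
      simp [disk, diskX]))
    (fun j hj => by
      have : ¬ (n = n + 1 ∧ j = n + 1 - 1) := by omega
      simp only [disk, dif_neg this, comp_zero]
      rfl)

-- my additions
namespace LiftingAux

open HomologicalComplex

variable {k : Type} [CommRing k] {X Y : ChainComplex (ModuleCat k) ℤ}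

lemma diskX_eq (V : ModuleCat k) {n i : ℤ} (h : i = n ∨ i = n - 1) : diskX V n i = V := by
  rw [diskX, if_pos h]

lemma disk_X_eq (V : ModuleCat k) {n i : ℤ} (h : i = n ∨ i = n - 1) : (disk V n).X i = V :=
  diskX_eq V h

lemma disk_d_eq (V : ModuleCat k) (n : ℤ) :
    (disk V n).d n (n-1) =
      eqToHom ((disk_X_eq V (Or.inl rfl)).trans (disk_X_eq V (Or.inr rfl)).symm) := by
  dsimp only [disk]
  rw [dif_pos ⟨rfl, rfl⟩]

lemma disk_d_eq_zero (V : ModuleCat k) {n i j : ℤ} (h : ¬ (i = n ∧ j = n - 1)) :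
    (disk V n).d i j = 0 := by
  dsimp only [disk]
  rw [dif_neg h]
  rfl

noncomputable def toDisk (V : ModuleCat k) (n : ℤ) (φ : X.X (n-1) ⟶ V) : X ⟶ disk V n where
  f i :=
    if hi : i = n then
      (X.d i (n-1) ≫ φ) ≫ eqToHom (disk_X_eq V (Or.inl hi)).symm
    else if hi' : i = n - 1 then
      (eqToHom (show X.X i = X.X (n-1) by rw [hi']) ≫ φ) ≫
        eqToHom (disk_X_eq V (Or.inr hi')).symm
    else 0
  comm' i j hij := by
    have hij' : j + 1 = i := hij
    by_cases hi : i = n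
    · subst hi
      obtain rfl : j = i - 1 := by omega
      rw [dif_pos rfl, dif_neg (by omega), dif_pos rfl, disk_d_eq]
      simp
    · rw [dif_neg hi, disk_d_eq_zero V (by tauto), comp_zero]
      by_cases hj : j = n
      · rw [dif_pos hj]
        subst hj
        simp
      · by_cases hj' : j = n - 1
        · exact absurd (by omega : i = n) hi
        · rw [dif_neg hj, dif_neg hj', comp_zero]

lemma toDisk_f_n (V : ModuleCat k) (n : ℤ) (φ : X.X (n-1) ⟶ V) :
    (toDisk V n φ).f n = (X.d n (n-1) ≫ φ) ≫ eqToHom (disk_X_eq V (Or.inl rfl)).symm := by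
  dsimp [toDisk]
  rw [dif_pos rfl]

lemma toDisk_f_pred (V : ModuleCat k) (n : ℤ) (φ : X.X (n-1) ⟶ V) :
    (toDisk V n φ).f (n-1) = φ ≫ eqToHom (disk_X_eq V (Or.inr rfl)).symm := by
  dsimp [toDisk]
  rw [dif_neg (by omega), dif_pos rfl]
  simp

lemma diskToSphere_f_n (V : ModuleCat k) (n : ℤ) :
    (diskToSphere V n).f n = eqToHom (disk_X_eq V (Or.inl rfl)) ≫
      (singleObjXSelf (ComplexShape.down ℤ) n V).inv := by
  dsimp [diskToSphere]
  rw [mkHomToSingle_f]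

lemma key (V : ModuleCat k) (f : X ⟶ Y) {n i j m : ℤ}
    (hlp : HasLiftingProperty f (diskToSphere V n))
    (hi : i = n) (hj : j = n - 1) (hm : m = n + 1)
    (φ : X.X j ⟶ V) (ψ : Y.X i ⟶ V)
    (hψ : Y.d m i ≫ ψ = 0) (hc : f.f i ≫ ψ = X.d i j ≫ φ) :
    ∃ φ' : Y.X j ⟶ V, f.f j ≫ φ' = φ ∧ Y.d i j ≫ φ' = ψ := by
  subst hi hj hm
  have hψ' : ∀ l, (ComplexShape.down ℤ).Rel l i → Y.d l i ≫ ψ = 0 := by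
    intro l hl
    obtain rfl : l = i + 1 := by
      have : i + 1 = l := hl
      omega
    exact hψ
  have hsq : CommSq (toDisk V i φ) f (diskToSphere V i) (mkHomToSingle ψ hψ') := by
    constructor
    apply to_single_hom_ext
    rw [HomologicalComplex.comp_f]
    erw [HomologicalComplex.comp_f]
    rw [toDisk_f_n, diskToSphere_f_n, mkHomToSingle_f]
    simp only [Category.assoc, eqToHom_trans_assoc, eqToHom_refl, Category.id_comp]
    rw [← Category.assoc, ← hc, Category.assoc]
    erw [Category.assoc, Category.assoc, eqToHom_trans_assoc, eqToHom_refl, Category.id_comp]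
    rfl
  have hlift := (hlp.sq_hasLift hsq)
  refine ⟨hsq.lift.f (i-1) ≫ eqToHom (disk_X_eq V (Or.inr rfl)), ?_, ?_⟩
  · have hthis := congrArg (fun t => HomologicalComplex.Hom.f t (i-1)) hsq.fac_left
    simp only [HomologicalComplex.comp_f] at hthis
    rw [toDisk_f_pred] at hthis
    rw [← Category.assoc, hthis, Category.assoc, eqToHom_trans, eqToHom_refl,
      Category.comp_id]
  · have hcomm := hsq.lift.comm i (i-1)
    have hfac := congrArg (fun t => HomologicalComplex.Hom.f t i) hsq.fac_right
    simp only [HomologicalComplex.comp_f] at hfac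
    rw [mkHomToSingle_f, diskToSphere_f_n] at hfac
    have hfac' : hsq.lift.f i ≫ eqToHom (disk_X_eq V (Or.inl rfl)) = ψ := by
      exact (cancel_mono (singleObjXSelf (ComplexShape.down ℤ) i V).inv).1
        (by rw [Category.assoc]; exact hfac)
    rw [disk_d_eq] at hcomm
    rw [← Category.assoc, ← hcomm, Category.assoc, eqToHom_trans]
    exact hfac'

section derived

variable (V : ModuleCat k) (f : X ⟶ Y)
  (hlp : ∀ n : ℤ, HasLiftingProperty f (diskToSphere V n))

include hlp

lemma keyZ (n : ℤ) (φ : X.X n ⟶ V) (hφ : X.d (n+1) n ≫ φ = 0) :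
    ∃ ψ : Y.X n ⟶ V, f.f n ≫ ψ = φ ∧ Y.d (n+1) n ≫ ψ = 0 := by
  obtain ⟨φ', h1, h2⟩ := key V f (n := n+1) (i := n+1) (j := n) (m := n+1+1) (hlp (n+1)) rfl (by omega) (by omega)
    φ (0 : Y.X (n+1) ⟶ V) (by simp) (by rw [comp_zero, hφ])
  exact ⟨φ', h1, h2⟩

lemma keyS (n : ℤ) (φ : X.X n ⟶ V) : ∃ φ' : Y.X n ⟶ V, f.f n ≫ φ' = φ := by
  obtain ⟨ψ, hψ1, hψ2⟩ := keyZ V f hlp (n+1) (X.d (n+1) n ≫ φ) (by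
    rw [← Category.assoc]
    simp)
  obtain ⟨φ', h1, _⟩ := key V f (n := n+1) (i := n+1) (j := n) (m := n+1+1) (hlp (n+1)) rfl (by omega) (by omega) φ ψ hψ2 hψ1
  exact ⟨φ', h1⟩

end derived

end LiftingAux

namespace LiftingAux

section field

variable {k : Type} [Field k] {X Y : ChainComplex (ModuleCat k) ℤ}

/-- separation of a point from a submodule by a functional -/
lemma exists_functional {M : ModuleCat k} (p : Submodule k M) {v : M} (hv : v ∉ p) :
    ∃ φ : M ⟶ ModuleCat.of k k, (∀ x ∈ p, φ x = 0) ∧ φ v ≠ 0 := by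
  have h0 : Submodule.Quotient.mk (p := p) v ≠ 0 := by
    simpa [Submodule.Quotient.mk_eq_zero] using hv
  have : ∃ ψ : (M ⧸ p) →ₗ[k] k, ψ (Submodule.Quotient.mk v) ≠ 0 := by
    by_contra hc
    push_neg at hc
    exact h0 ((Module.forall_dual_apply_eq_zero_iff k _).1 hc)
  obtain ⟨ψ, hψ⟩ := this
  refine ⟨ModuleCat.ofHom (ψ.comp p.mkQ : M →ₗ[k] k), fun x hx => ?_, hψ⟩
  have hz : p.mkQ x = 0 := by
    rw [Submodule.mkQ_apply, Submodule.Quotient.mk_eq_zero]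
    exact hx
  show ψ (p.mkQ x) = 0
  rw [hz, map_zero]

variable (f : X ⟶ Y)
  (hlp : ∀ n : ℤ, HasLiftingProperty f (diskToSphere (ModuleCat.of k k) n))

include hlp

lemma f_injective (n : ℤ) : Function.Injective (f.f n) := by
  rw [injective_iff_map_eq_zero]
  intro x hx
  by_contra hx0
  obtain ⟨φ, _, hφv⟩ := exists_functional (⊥ : Submodule k (X.X n))
    (by simpa using hx0)
  obtain ⟨φ', hφ'⟩ := keyS (ModuleCat.of k k) f hlp n φ
  apply hφv
  have := congrArg (fun t => t x) hφ'
  simp only [CategoryTheory.comp_apply] at this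
  rw [← this, hx, map_zero]

lemma homology_inj (n p : ℤ) (hp : p = n + 1) (x : X.X n)
    (hb : ∃ b, Y.d p n b = f.f n x) : ∃ a, X.d p n a = x := by
  subst hp
  by_contra hc
  push_neg at hc
  have hx : x ∉ LinearMap.range (X.d (n+1) n).hom := by
    rintro ⟨a, ha⟩
    exact hc a ha
  obtain ⟨φ, hφ0, hφv⟩ := exists_functional _ hx
  obtain ⟨ψ, hψ1, hψ2⟩ := keyZ (ModuleCat.of k k) f hlp n φ (by
    ext a
    exact hφ0 _ ⟨a, rfl⟩)
  obtain ⟨b, hb⟩ := hb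
  apply hφv
  have := congrArg (fun t => t x) hψ1
  simp only [CategoryTheory.comp_apply] at this
  rw [← this, ← hb]
  have h2 := congrArg (fun t => t b) hψ2
  simpa using h2

lemma homology_surj (n p q : ℤ) (hp : p = n + 1) (hq : q = n - 1) (y : Y.X n)
    (hy : Y.d n q y = 0) :
    ∃ x : X.X n, X.d n q x = 0 ∧ ∃ b, f.f n x - y = Y.d p n b := by
  subst hp hq
  set Z : Submodule k (X.X n) :=
    LinearMap.ker (X.d n (n-1)).hom with hZ
  set U : Submodule k (Y.X n) :=
    Submodule.map (f.f n).hom Z ⊔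
      LinearMap.range (Y.d (n+1) n).hom with hU
  have hyU : y ∈ U := by
    by_contra hyU
    obtain ⟨ψ, hψ0, hψv⟩ := exists_functional U hyU
    have hψd : Y.d (n+1) n ≫ ψ = 0 := by
      ext a
      exact hψ0 _ (Submodule.mem_sup_right ⟨a, rfl⟩)
    have hker : LinearMap.ker (X.d n (n-1)).hom
        ≤ LinearMap.ker (f.f n ≫ ψ).hom := by
      intro x hxk
      have : ψ (f.f n x) = 0 := hψ0 _ (Submodule.mem_sup_left ⟨x, hxk, rfl⟩)
      simpa [LinearMap.mem_ker] using this
    set d := (X.d n (n-1)).hom with hd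
    set g := (f.f n ≫ ψ).hom with hg
    let e := LinearMap.quotKerEquivRange d
    let φ₀ : LinearMap.range d →ₗ[k] k :=
      (LinearMap.ker d).liftQ g hker ∘ₗ (e.symm : LinearMap.range d →ₗ[k] _)
    obtain ⟨Φ, hΦ⟩ := LinearMap.exists_extend φ₀
    have hΦd : ∀ a : X.X n, Φ (d a) = ψ (f.f n a) := by
      intro a
      have h1 : (⟨d a, LinearMap.mem_range_self d a⟩ : LinearMap.range d)
          = e (Submodule.Quotient.mk a) := by
        ext
        simp [e, LinearMap.quotKerEquivRange]
      have h2 : Φ (d a) = φ₀ ⟨d a, LinearMap.mem_range_self d a⟩ :=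
        (LinearMap.congr_fun hΦ ⟨d a, LinearMap.mem_range_self d a⟩)
      rw [h2, h1]
      show ((LinearMap.ker d).liftQ g hker) (e.symm (e (Submodule.Quotient.mk a))) = _
      rw [LinearEquiv.symm_apply_apply, Submodule.liftQ_apply]
      rfl
    have hcφ : f.f n ≫ ψ = X.d n (n-1) ≫ ModuleCat.ofHom Φ := by
      ext a
      exact (hΦd a).symm
    obtain ⟨φ', _, hφ'2⟩ := key (ModuleCat.of k k) f (n := n) (i := n) (j := n-1) (m := n+1)
      (hlp n) rfl rfl rfl (ModuleCat.ofHom Φ) ψ hψd hcφ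
    apply hψv
    have hthis := congrArg (fun t => t y) hφ'2
    simp only [CategoryTheory.comp_apply] at hthis
    rw [← hthis, hy, map_zero]
  obtain ⟨u, hu, v, hv, huv⟩ := Submodule.mem_sup.1 hyU
  obtain ⟨x, hxZ, rfl⟩ := hu
  obtain ⟨b, rfl⟩ := hv
  refine ⟨x, hxZ, -b, ?_⟩
  rw [map_neg, ← huv]
  abel

end field

end LiftingAux

namespace LiftingAux

variable {k : Type} [Field k]

open CategoryTheory.ShortComplex

lemma quasiIso_of_concrete {S₁ S₂ : CategoryTheory.ShortComplex (ModuleCat k)} (φ : S₁ ⟶ S₂)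
    (h1 : ∀ x : S₁.X₂, S₁.g x = 0 → (∃ b, S₂.f b = φ.τ₂ x) → ∃ a, S₁.f a = x)
    (h2 : ∀ y : S₂.X₂, S₂.g y = 0 → ∃ x, S₁.g x = 0 ∧ ∃ b, φ.τ₂ x - y = S₂.f b) :
    CategoryTheory.ShortComplex.QuasiIso φ := by
  have hres : ∀ x ∈ LinearMap.ker S₁.g.hom,
      φ.τ₂ x ∈ LinearMap.ker S₂.g.hom := by
    intro x hx
    have := congrArg (fun t => t x) φ.comm₂₃
    simp only [CategoryTheory.comp_apply] at this
    simp only [LinearMap.mem_ker] at hx ⊢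
    have hx' : S₁.g x = 0 := hx
    change S₂.g (φ.τ₂ x) = 0
    rw [this, hx', map_zero]
  let φK : ModuleCat.of k (LinearMap.ker S₁.g.hom) ⟶
      ModuleCat.of k (LinearMap.ker S₂.g.hom) :=
    ModuleCat.ofHom (φ.τ₂.hom.restrict hres)
  have hmapQ : LinearMap.range S₁.moduleCatToCycles ≤
      Submodule.comap φK.hom (LinearMap.range S₂.moduleCatToCycles) := by
    rintro _ ⟨a, rfl⟩
    refine ⟨φ.τ₁ a, ?_⟩
    apply Subtype.ext
    show S₂.f (φ.τ₁ a) = φ.τ₂ (S₁.f a)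
    exact congrArg (fun t => t a) φ.comm₁₂
  let φH : S₁.moduleCatLeftHomologyData.H ⟶ S₂.moduleCatLeftHomologyData.H :=
    ModuleCat.ofHom (Submodule.mapQ _ _ φK.hom hmapQ)
  let γ : LeftHomologyMapData φ S₁.moduleCatLeftHomologyData S₂.moduleCatLeftHomologyData :=
    { φK := φK
      φH := φH
      commi := by ext x; rfl
      commf' := by
        ext a
        apply Subtype.ext
        show φ.τ₂ (S₁.f a) = S₂.f (φ.τ₁ a)
        exact (congrArg (fun t => t a) φ.comm₁₂).symm
      commπ := by
        ext x
        show φH (Submodule.Quotient.mk x) = Submodule.Quotient.mk (φK x)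
        exact Submodule.mapQ_apply (h := hmapQ) _ _ _ _ }
  rw [γ.quasiIso_iff]
  have hinj : Function.Injective φH := by
    rw [injective_iff_map_eq_zero]
    intro z hz
    obtain ⟨x, rfl⟩ := Submodule.Quotient.mk_surjective _ z
    rw [show φH (Submodule.Quotient.mk x) = Submodule.Quotient.mk (φK x) from
      Submodule.mapQ_apply (h := hmapQ) _ _ _ _] at hz
    erw [Submodule.Quotient.mk_eq_zero] at hz
    obtain ⟨b, hb⟩ := hz
    have hb' : S₂.f b = φ.τ₂ ↑x := congrArg Subtype.val hb
    obtain ⟨a, ha⟩ := h1 x.1 x.2 ⟨b, hb'⟩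
    erw [Submodule.Quotient.mk_eq_zero]
    exact ⟨a, Subtype.ext ha⟩
  have hsurj : Function.Surjective φH := by
    intro z
    obtain ⟨y, rfl⟩ := Submodule.Quotient.mk_surjective _ z
    obtain ⟨x, hx, b, hb⟩ := h2 y.1 y.2
    refine ⟨Submodule.Quotient.mk ⟨x, hx⟩, ?_⟩
    rw [show φH (Submodule.Quotient.mk ⟨x, hx⟩) = Submodule.Quotient.mk (φK ⟨x, hx⟩) from
      Submodule.mapQ_apply (h := hmapQ) _ _ _ _]
    erw [Submodule.Quotient.eq]
    exact ⟨b, Subtype.ext hb.symm⟩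
  have : IsIso φH := by
    have h := (ModuleCat.mono_iff_injective φH).2 hinj
    have h' := (ModuleCat.epi_iff_surjective φH).2 hsurj
    exact isIso_of_mono_of_epi φH
  exact this

end LiftingAux


/-- A chain map over a field with the left lifting property with respect to all maps
`D^n ⟶ S^n` (`n ∈ ℤ`) is a monomorphism and a quasi-isomorphism. -/
theorem mono_and_quasiIso_of_llp_disk_to_sphere (k : Type) [Field k]
    {X Y : ChainComplex (ModuleCat k) ℤ} (f : X ⟶ Y)
    (h : ∀ n : ℤ, HasLiftingProperty f (diskToSphere (ModuleCat.of k k) n)) :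
    Mono f ∧ QuasiIso f := by
  constructor
  · apply HomologicalComplex.mono_of_mono_f
    intro i
    rw [ModuleCat.mono_iff_injective]
    exact LiftingAux.f_injective f h i
  · refine ⟨fun n => ?_⟩
    rw [quasiIsoAt_iff]
    have hp : (ComplexShape.down ℤ).prev n = n + 1 :=
      (ComplexShape.down ℤ).prev_eq' (by simp)
    have hq : (ComplexShape.down ℤ).next n = n - 1 :=
      (ComplexShape.down ℤ).next_eq' (by show n-1+1 = n; omega)
    apply LiftingAux.quasiIso_of_concrete
    · intro x _ hb
      exact LiftingAux.homology_inj f h n _ hp x hb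
    · intro y hy
      exact LiftingAux.homology_surj f h n _ _ hp hq y hy
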